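/- Let T ⊆ (2Ω)^{<ω} be a well-founded fat tree of rank β, and let L_T be the lexicographic order on T⁺ = {σ⌢a : σ ∈ T, σ⌢a ∉ T, a ∈ ω ∪ Ω ∪ {∞}}. Then the Hausdorff rank of L_T is exactly β + 1. -/

import Mathlib

/-- The symbols `ω ∪ Ω ∪ {∞}`: `fin n` is the natural number `n`, `pair n` is the
pair `(n, n+1) ∈ Ω`, and `infty` is `∞`. -/
inductive Symb : Type
  | fin : ℕ → Symb
  | pair : ℕ → Symb
  | infty : Symb
deriving DecidableEq

/-- Position of a symbol in the order `0 < (0,1) < 1 < (1,2) < 2 < ⋯ < ∞`. -/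
def Symb.val : Symb → WithTop ℕ
  | .fin n => ((2 * n : ℕ) : WithTop ℕ)
  | .pair n => ((2 * n + 1 : ℕ) : WithTop ℕ)
  | .infty => ⊤

theorem Symb.val_injective : Function.Injective Symb.val := by
  rintro (n | n | _) (m | m | _) h <;>
    simp only [Symb.val] at h <;>
    first
      | rfl
      | (norm_cast at h <;> first | (congr 1; omega) | (exact absurd h (by omega)))

/-- The linear order `0 < (0,1) < 1 < (1,2) < 2 < ⋯ < ∞` on `ω ∪ Ω ∪ {∞}`. -/
instance : LinearOrder Symb := LinearOrder.lift' Symb.val Symb.val_injective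

noncomputable section

variable {α : Type*}

/-- A tree on `α`: a set of finite sequences closed under initial segments. -/
def IsTree (T : Set (List α)) : Prop :=
  ∀ σ ∈ T, ∀ τ : List α, τ <+: σ → τ ∈ T

/-- `σ` lies on an infinite path of `T`. -/
def IllNode (T : Set (List α)) (σ : List α) : Prop :=
  ∃ f : ℕ → α, ∀ n : ℕ, σ ++ List.ofFn (fun i : Fin n => f i) ∈ T

/-- `T` is well-founded: it has no infinite path. -/
def WellFoundedTree (T : Set (List α)) : Prop := ¬ IllNode T []

/-- The set of nodes of `T` removed within `γ` rounds of leaf-removal: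
a node is removed by stage `γ` if each of its children was removed at some earlier stage. -/
def prunedAt (T : Set (List α)) (γ : Ordinal.{0}) : Set (List α) :=
  Ordinal.lt_wf.fix (C := fun _ => Set (List α))
    (fun γ ih =>
      {σ | σ ∈ T ∧ ∀ a : α, σ ++ [a] ∈ T → ∃ β : Ordinal.{0}, ∃ h : β < γ, σ ++ [a] ∈ ih β h}) γ

open Classical in
/-- The rank of a node of `T`: nodes on an infinite path get rank `∞ = ⊤`;
well-founded nodes get the paper's ordinal rank, so that leaves have rank `1` and
the rank of a node is computed from the stage at which leaf-removal removes it. -/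
def erank (T : Set (List α)) (σ : List α) : WithTop Ordinal.{0} :=
  if IllNode T σ then ⊤
  else ((sInf {γ : Ordinal.{0} | σ ∈ prunedAt T γ} + 1 : Ordinal) : WithTop Ordinal.{0})

/-- `β < γ` for extended ranks, with the paper's convention that `∞ < ∞` is true. -/
def eLT (β γ : WithTop Ordinal.{0}) : Prop := β < γ ∨ (β = ⊤ ∧ γ = ⊤)

/-- `T` is fat: every node `σ ∈ T` of rank `α` has, for every (attained, i.e. `≥ 1`) rank
`β < α`, infinitely many children in `T` of rank exactly `β`. -/
def FatTree (T : Set (List α)) : Prop :=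
  ∀ σ ∈ T, ∀ β : WithTop Ordinal.{0}, 1 ≤ β → eLT β (erank T σ) →
    {a : α | σ ++ [a] ∈ T ∧ erank T (σ ++ [a]) = β}.Infinite

end

noncomputable section

/-- Given a relation `E` on a linear order, `hausdorffRel E a b` says that the closed
interval between `a` and `b` is covered by finitely many `E`-classes; when `E` is an
equivalence relation this is the pullback of the Hausdorff relation on the quotient. -/
def hausdorffRel {L : Type*} [LinearOrder L] (E : L → L → Prop) (a b : L) : Prop :=
  ∃ s : Finset L, ∀ c : L, min a b ≤ c → c ≤ max a b → ∃ d ∈ s, E c d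

/-- The transfinite iterates of the Hausdorff derivative relation on a linear order `L`:
`H_0` is equality, `H_{α+1}` is the pullback of the Hausdorff relation on the quotient
`L / H_α`, and at limits one takes unions. -/
def hausdorffIter (L : Type*) [LinearOrder L] (γ : Ordinal.{0}) : L → L → Prop :=
  Ordinal.limitRecOn (motive := fun _ => L → L → Prop) γ Eq
    (fun _ IH => hausdorffRel IH)
    (fun γ _ IH a b => ∃ β : Ordinal.{0}, ∃ h : β < γ, IH β h a b)

/-- A linear order is scattered if the rationals do not order-embed into it. -/
def Scattered (L : Type*) [LinearOrder L] : Prop :=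
  ¬ ∃ e : ℚ → L, ∀ q r : ℚ, q < r → e q < e r

end

/-- `T⁺ = {σ⌢a : σ ∈ T, σ⌢a ∉ T}` where `a` ranges over all symbols of `ω ∪ Ω ∪ {∞}`.
For a well-founded tree `T`, the order `L_T = T⁺ ∪ [T]` is just `T⁺`, viewed as a
suborder of the lexicographic order on finite sequences of symbols. -/
def Tplus (T : Set (List Symb)) : Set (List Symb) :=
  {l : List Symb | ∃ σ ∈ T, ∃ a : Symb, l = σ ++ [a] ∧ σ ++ [a] ∉ T}

section lex
variable {α : Type*} [LinearOrder α]

theorem lex_append_left {l₁ l₂ : List α} (σ : List α) (h : l₁ < l₂) : σ ++ l₁ < σ ++ l₂ := by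
  induction σ with
  | nil => exact h
  | cons a σ ih => exact List.Lex.cons ih

theorem lex_append_left_iff {l₁ l₂ : List α} (σ : List α) : σ ++ l₁ < σ ++ l₂ ↔ l₁ < l₂ := by
  induction σ with
  | nil => exact Iff.rfl
  | cons a σ ih => exact (List.lex_cons_iff).trans ih

theorem lex_append_left_le_iff {l₁ l₂ : List α} (σ : List α) : σ ++ l₁ ≤ σ ++ l₂ ↔ l₁ ≤ l₂ := by
  rw [← not_lt, ← not_lt, lex_append_left_iff]

theorem cons_lt_cons_iff' {a b : α} {u v : List α} :
    (a :: u : List α) < b :: v ↔ a < b ∨ (a = b ∧ u < v) := by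
  constructor
  · intro h
    cases h with
    | rel h => exact Or.inl h
    | cons h => exact Or.inr ⟨rfl, h⟩
  · rintro (h | ⟨rfl, h⟩)
    · exact List.Lex.rel h
    · exact List.Lex.cons h

theorem first_le_of_cons_le {a b : α} {u v : List α} (h : (a :: u : List α) ≤ b :: v) :
    a ≤ b := by
  by_contra hab
  push_neg at hab
  exact absurd (List.Lex.rel hab : (b :: v : List α) < a :: u) (not_lt.mpr h)

theorem singleton_le_cons {a b : α} {v : List α} (h : a ≤ b) : ([a] : List α) ≤ b :: v := by
  rcases lt_or_eq_of_le h with h | rfl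
  · exact le_of_lt (List.Lex.rel h)
  · cases v with
    | nil => exact le_rfl
    | cons c w => exact le_of_lt (List.Lex.cons (List.nil_lt_cons c w))

theorem prefix_or_lex (σ : List α) : ∀ c : List α,
    σ <+: c ∨ (∀ u : List α, c < σ ++ u) ∨ (∀ u : List α, σ ++ u < c) := by
  induction σ with
  | nil => exact fun c => Or.inl (List.nil_prefix)
  | cons s σ ih =>
    intro c
    cases c with
    | nil => exact Or.inr (Or.inl fun u => List.nil_lt_cons _ _)
    | cons t c' =>
      rcases lt_trichotomy t s with h | rfl | h
      · exact Or.inr (Or.inl fun u => List.Lex.rel h)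
      · rcases ih c' with ⟨w, hw⟩ | h | h
        · exact Or.inl ⟨w, by rw [List.cons_append, hw]⟩
        · exact Or.inr (Or.inl fun u => List.Lex.cons (h u))
        · exact Or.inr (Or.inr fun u => List.Lex.cons (h u))
      · exact Or.inr (Or.inr fun u => List.Lex.rel h)

end lex

instance : Nonempty Symb := ⟨Symb.infty⟩

namespace Symb

theorem lt_def {a b : Symb} : a < b ↔ a.val < b.val := Iff.rfl
theorem le_def {a b : Symb} : a ≤ b ↔ a.val ≤ b.val := Iff.rfl

theorem le_infty (a : Symb) : a ≤ infty := le_def.mpr (by simp [val])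

theorem val_ne_top_iff {a : Symb} : a ≠ infty ↔ ∃ n : ℕ, a.val = (n : WithTop ℕ) := by
  cases a with
  | fin n => exact ⟨fun _ => ⟨2 * n, rfl⟩, fun _ h => Symb.noConfusion h⟩
  | pair n => exact ⟨fun _ => ⟨2 * n + 1, rfl⟩, fun _ h => Symb.noConfusion h⟩
  | infty => exact ⟨fun h => absurd rfl h, fun ⟨n, hn⟩ => by simp [val] at hn⟩

theorem lt_infty {a : Symb} (h : a ≠ infty) : a < infty := by
  obtain ⟨n, hn⟩ := val_ne_top_iff.mp h
  rw [lt_def, hn]; exact WithTop.coe_lt_top n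

theorem fin_zero_le (a : Symb) : fin 0 ≤ a := by
  cases a with
  | fin n => exact le_def.mpr (by simp [val])
  | pair n => exact le_def.mpr (by simp [val])
  | infty => exact le_infty _

theorem fin_lt_fin {n m : ℕ} (h : n < m) : fin n < fin m := by
  rw [lt_def]; simp only [val]; exact_mod_cast (by omega : 2*n < 2*m)

theorem fin_zero_lt_pair (n : ℕ) : fin 0 < pair n := by
  rw [lt_def]; simp only [val]; exact_mod_cast (by omega : 2*0 < 2*n+1)

theorem pair_lt_infty (n : ℕ) : pair n < infty := lt_infty (by simp)

/-- Enumeration of the non-`infty` symbols. -/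
def ofNat (n : ℕ) : Symb := if n % 2 = 0 then fin (n / 2) else pair (n / 2)

theorem val_ofNat (n : ℕ) : (ofNat n).val = (n : WithTop ℕ) := by
  rw [ofNat]
  rcases Nat.even_or_odd n with h | h
  · have h2 : 2 * (n / 2) = n := by
      have := Nat.even_iff.mp h; omega
    rw [if_pos (Nat.even_iff.mp h)]
    simp only [val, h2]
  · have h2 : 2 * (n / 2) + 1 = n := by
      have := Nat.odd_iff.mp h; omega
    rw [if_neg (by have := Nat.odd_iff.mp h; omega : ¬ n % 2 = 0)]
    simp only [val, h2]

theorem eq_ofNat {a : Symb} {n : ℕ} (h : a.val = (n : WithTop ℕ)) : a = ofNat n :=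
  val_injective (by rw [h, val_ofNat])

theorem le_finite {b : Symb} (hb : b ≠ infty) : {a : Symb | a ≤ b}.Finite := by
  obtain ⟨N, hN⟩ := val_ne_top_iff.mp hb
  have : {a : Symb | a ≤ b} ⊆ ofNat '' {m : ℕ | m ≤ N} := by
    intro a ha
    have hne : a ≠ infty := by
      rintro rfl
      exact absurd (le_def.mp ha) (by rw [hN]; simp [val])
    obtain ⟨m, hm⟩ := val_ne_top_iff.mp hne
    have hmN : m ≤ N := by
      have := le_def.mp ha; rw [hm, hN] at this; exact_mod_cast this
    exact ⟨m, hmN, (eq_ofNat hm).symm⟩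
  exact Set.Finite.subset ((Set.finite_Iic N).image ofNat) this

end Symb

noncomputable section treefacts
variable {α : Type}

theorem mem_prunedAt {T : Set (List α)} {σ : List α} {γ : Ordinal.{0}} :
    σ ∈ prunedAt T γ ↔ σ ∈ T ∧ ∀ a : α, σ ++ [a] ∈ T →
      ∃ β : Ordinal.{0}, β < γ ∧ σ ++ [a] ∈ prunedAt T β := by
  conv_lhs => rw [prunedAt, WellFounded.fix_eq]
  constructor
  · rintro ⟨h1, h2⟩
    exact ⟨h1, fun a ha => by obtain ⟨β, hβ, hm⟩ := h2 a ha; exact ⟨β, hβ, hm⟩⟩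
  · rintro ⟨h1, h2⟩
    exact ⟨h1, fun a ha => by obtain ⟨β, hβ, hm⟩ := h2 a ha; exact ⟨β, hβ, hm⟩⟩

theorem prunedAt_mono {T : Set (List α)} {σ : List α} {γ γ' : Ordinal.{0}}
    (h : σ ∈ prunedAt T γ) (hγ : γ ≤ γ') : σ ∈ prunedAt T γ' := by
  rw [mem_prunedAt] at h ⊢
  exact ⟨h.1, fun a ha => by
    obtain ⟨β, hβ, hm⟩ := h.2 a ha; exact ⟨β, lt_of_lt_of_le hβ hγ, hm⟩⟩

/-- The ordinal rank of a node. -/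
def rk (T : Set (List α)) (σ : List α) : Ordinal.{0} :=
  sInf {γ : Ordinal.{0} | σ ∈ prunedAt T γ} + 1

theorem erank_eq_rk {T : Set (List α)} {σ : List α} (h : ¬ IllNode T σ) :
    erank T σ = (rk T σ : WithTop Ordinal.{0}) := by
  rw [erank, if_neg h]; rfl

theorem ill_of_ill_extend {T : Set (List α)} (hT : IsTree T) {σ : List α} {a : α}
    (h : IllNode T (σ ++ [a])) : IllNode T σ := by
  obtain ⟨f, hf⟩ := h
  refine ⟨fun n => Nat.casesOn n a f, fun n => ?_⟩
  cases n with
  | zero =>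
    simpa using hT _ (by simpa using hf 0) σ ⟨[a], rfl⟩
  | succ m =>
    have : (List.ofFn fun i : Fin (m+1) => (Nat.casesOn i.val a f : α)) =
        a :: List.ofFn (fun i : Fin m => f i) := by
      rw [List.ofFn_succ]; rfl
    rw [this]
    simpa [List.append_assoc] using hf m

theorem ill_root_of_ill {T : Set (List α)} (hT : IsTree T) {σ : List α}
    (h : IllNode T σ) : IllNode T [] := by
  induction σ using List.reverseRecOn with
  | nil => exact h
  | append_singleton l a ih => exact ih (ill_of_ill_extend hT h)

theorem not_ill {T : Set (List α)} (hT : IsTree T) (hwf : WellFoundedTree T) (σ : List α) :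
    ¬ IllNode T σ := fun h => hwf (ill_root_of_ill hT h)

theorem exists_prunedAt {T : Set (List α)} [Nonempty α] (hT : IsTree T)
    (hwf : WellFoundedTree T) {σ : List α} (hσ : σ ∈ T) :
    σ ∈ prunedAt T (sInf {γ : Ordinal.{0} | σ ∈ prunedAt T γ}) := by
  have hne : {γ : Ordinal.{0} | σ ∈ prunedAt T γ}.Nonempty := by
    by_contra hemp
    rw [Set.not_nonempty_iff_eq_empty] at hemp
    -- every node above σ is never pruned; build an infinite path
    have hP0 : σ ∈ T ∧ ∀ γ : Ordinal.{0}, σ ∉ prunedAt T γ := ⟨hσ, fun γ hγ => by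
      have : γ ∈ {γ : Ordinal.{0} | σ ∈ prunedAt T γ} := hγ
      rw [hemp] at this; exact this⟩
    have step : ∀ τ : List α, (τ ∈ T ∧ ∀ γ : Ordinal.{0}, τ ∉ prunedAt T γ) →
        ∃ a : α, (τ ++ [a] ∈ T ∧ ∀ γ : Ordinal.{0}, τ ++ [a] ∉ prunedAt T γ) := by
      intro τ hτ
      by_contra hno
      push_neg at hno
      have hch : ∀ a : α, τ ++ [a] ∈ T → ∃ γ : Ordinal.{0}, τ ++ [a] ∈ prunedAt T γ := by
        intro a ha
        have h := hno a ha
        exact h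
      classical
      set g : α → Ordinal.{0} := fun a =>
        if h : ∃ γ : Ordinal.{0}, τ ++ [a] ∈ prunedAt T γ then h.choose else 0 with hg
      have : τ ∈ prunedAt T (iSup g + 1) := by
        rw [mem_prunedAt]
        refine ⟨hτ.1, fun a ha => ?_⟩
        have hex := hch a ha
        refine ⟨g a, ?_, ?_⟩
        · calc g a ≤ iSup g := le_ciSup (Ordinal.bddAbove_range g) a
          _ < iSup g + 1 := by
              rw [Ordinal.add_one_eq_succ]; exact Order.lt_succ _
        · rw [hg]; simp only [dif_pos hex]; exact hex.choose_spec
      exact hτ.2 _ this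
    let seq : ℕ → {τ : List α // τ ∈ T ∧ ∀ γ : Ordinal.{0}, τ ∉ prunedAt T γ} := fun n =>
      Nat.rec ⟨σ, hP0⟩ (fun _ p => ⟨p.1 ++ [(step p.1 p.2).choose], (step p.1 p.2).choose_spec⟩) n
    set f : ℕ → α := fun n => (step (seq n).1 (seq n).2).choose with hf
    have hseq : ∀ n : ℕ, (seq n).1 = σ ++ List.ofFn (fun i : Fin n => f i) := by
      intro n
      induction n with
      | zero =>
        show σ = σ ++ List.ofFn (fun i : Fin 0 => f i)
        simp
      | succ m ih =>
        have h1 : (seq (m+1)).1 = (seq m).1 ++ [f m] := rfl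
        rw [h1, ih, List.ofFn_succ']
        simp [List.concat_eq_append]
    exact not_ill hT hwf σ ⟨f, fun n => by rw [← hseq n]; exact (seq n).2.1⟩
  exact csInf_mem hne

theorem rk_pos {T : Set (List α)} (σ : List α) : (0 : Ordinal.{0}) < rk T σ := by
  rw [rk, Ordinal.add_one_eq_succ]
  exact Order.bot_lt_succ _

theorem rk_child_lt {T : Set (List α)} [Nonempty α] (hT : IsTree T) (hwf : WellFoundedTree T)
    {σ : List α} (hσ : σ ∈ T) {a : α} (ha : σ ++ [a] ∈ T) :
    rk T (σ ++ [a]) < rk T σ := by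
  have hmem := exists_prunedAt hT hwf hσ
  rw [mem_prunedAt] at hmem
  obtain ⟨β, hβ, hm⟩ := hmem.2 a ha
  have h1 : sInf {γ : Ordinal.{0} | σ ++ [a] ∈ prunedAt T γ} ≤ β := csInf_le' hm
  rw [rk, rk]
  have : sInf {γ : Ordinal.{0} | σ ++ [a] ∈ prunedAt T γ} + 1 ≤
      sInf {γ : Ordinal.{0} | σ ∈ prunedAt T γ} := by
    rw [Ordinal.add_one_eq_succ]
    exact Order.succ_le_of_lt (lt_of_le_of_lt h1 hβ)
  exact lt_of_le_of_lt this (by rw [Ordinal.add_one_eq_succ]; exact Order.lt_succ _)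

theorem erank_child {T : Set (List α)} [Nonempty α] (hT : IsTree T) (hwf : WellFoundedTree T)
    {σ : List α} (hσ : σ ∈ T) {a : α} (ha : σ ++ [a] ∈ T) :
    erank T (σ ++ [a]) = (rk T (σ ++ [a]) : WithTop Ordinal.{0}) ∧
      rk T (σ ++ [a]) < rk T σ :=
  ⟨erank_eq_rk (not_ill hT hwf _), rk_child_lt hT hwf hσ ha⟩

end treefacts

noncomputable section hausfacts
variable {L : Type*} [LinearOrder L]

theorem hausdorffIter_zero' : hausdorffIter L 0 = Eq := by
  rw [hausdorffIter, Ordinal.limitRecOn_zero]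

theorem hausdorffIter_succ' (γ : Ordinal.{0}) :
    hausdorffIter L (γ + 1) = hausdorffRel (hausdorffIter L γ) := by
  rw [hausdorffIter, Ordinal.add_one_eq_succ, Ordinal.limitRecOn_succ]; rfl

theorem hausdorffIter_limit' {γ : Ordinal.{0}} (h : Order.IsSuccLimit γ) (a b : L) :
    hausdorffIter L γ a b ↔ ∃ β : Ordinal.{0}, ∃ _ : β < γ, hausdorffIter L β a b := by
  rw [hausdorffIter, Ordinal.limitRecOn_limit _ _ _ _ h]; exact Iff.rfl

section hr
variable {E : L → L → Prop} {a b c : L}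

theorem hr_refl (hrefl : ∀ a : L, E a a) (a : L) : hausdorffRel E a a := by
  refine ⟨{a}, fun c h1 h2 => ⟨a, Finset.mem_singleton_self a, ?_⟩⟩
  simp only [min_self, max_self] at h1 h2
  rw [le_antisymm h2 h1]; exact hrefl a

theorem hr_symm (h : hausdorffRel E a b) : hausdorffRel E b a := by
  obtain ⟨s, hs⟩ := h
  exact ⟨s, fun c h1 h2 => hs c (by rwa [min_comm]) (by rwa [max_comm])⟩

theorem hr_trans (h1 : hausdorffRel E a b) (h2 : hausdorffRel E b c) :
    hausdorffRel E a c := by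
  obtain ⟨s1, hs1⟩ := h1
  obtain ⟨s2, hs2⟩ := h2
  refine ⟨s1 ∪ s2, fun d hd1 hd2 => ?_⟩
  rcases le_total d b with hdb | hbd
  · rcases min_le_iff.mp hd1 with h | h
    · obtain ⟨e, he, hE⟩ := hs1 d (min_le_iff.mpr (Or.inl h)) (le_max_iff.mpr (Or.inr hdb))
      exact ⟨e, Finset.mem_union_left _ he, hE⟩
    · obtain ⟨e, he, hE⟩ := hs2 d (min_le_iff.mpr (Or.inr h)) (le_max_iff.mpr (Or.inl hdb))
      exact ⟨e, Finset.mem_union_right _ he, hE⟩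
  · rcases le_max_iff.mp hd2 with h | h
    · obtain ⟨e, he, hE⟩ := hs1 d (min_le_iff.mpr (Or.inr hbd)) (le_max_iff.mpr (Or.inl h))
      exact ⟨e, Finset.mem_union_left _ he, hE⟩
    · obtain ⟨e, he, hE⟩ := hs2 d (min_le_iff.mpr (Or.inl hbd)) (le_max_iff.mpr (Or.inr h))
      exact ⟨e, Finset.mem_union_right _ he, hE⟩

theorem hr_conv (h : hausdorffRel E a b) (hac : a ≤ c) (hcb : c ≤ b) :
    hausdorffRel E a c := by
  obtain ⟨s, hs⟩ := h
  refine ⟨s, fun d hd1 hd2 => ?_⟩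
  have hab : a ≤ b := le_trans hac hcb
  rw [min_eq_left hac] at hd1
  rw [max_eq_right hac] at hd2
  exact hs d (by rw [min_eq_left hab]; exact hd1) (by rw [max_eq_right hab]; exact le_trans hd2 hcb)

theorem hr_of_E (hsymm : ∀ x y : L, E x y → E y x)
    (htrans : ∀ x y z : L, E x y → E y z → E x z)
    (hconv : ∀ x y z : L, E x y → x ≤ z → z ≤ y → E x z) (h : E a b) :
    hausdorffRel E a b := by
  refine ⟨{a}, fun d hd1 hd2 => ⟨a, Finset.mem_singleton_self a, ?_⟩⟩
  rcases le_total a b with hab | hba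
  · rw [min_eq_left hab] at hd1; rw [max_eq_right hab] at hd2
    exact hsymm _ _ (hconv a b d h hd1 hd2)
  · rw [min_eq_right hba] at hd1; rw [max_eq_left hba] at hd2
    exact htrans _ _ _ (hsymm _ _ (hconv b a d (hsymm _ _ h) hd1 hd2)) (htrans _ _ _ (hsymm _ _ h) h |> fun _ => hsymm _ _ h)

end hr

section pack
variable (L)

theorem hIter_pack (γ : Ordinal.{0}) :
    (∀ a : L, hausdorffIter L γ a a) ∧
    (∀ a b : L, hausdorffIter L γ a b → hausdorffIter L γ b a) ∧
    (∀ a b c : L, hausdorffIter L γ a b → hausdorffIter L γ b c → hausdorffIter L γ a c) ∧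
    (∀ a b c : L, hausdorffIter L γ a b → a ≤ c → c ≤ b → hausdorffIter L γ a c) ∧
    (∀ β : Ordinal.{0}, β ≤ γ → ∀ a b : L, hausdorffIter L β a b → hausdorffIter L γ a b) := by
  induction γ using Ordinal.induction with
  | _ γ IH =>
  rcases Ordinal.zero_or_succ_or_isSuccLimit γ with rfl | ⟨δ, rfl⟩ | hlim
  · simp only [hausdorffIter_zero']
    refine ⟨fun a => trivial, fun a b h => h.symm, fun a b c h1 h2 => h1.trans h2,
      fun a b c h1 h2 h3 => le_antisymm h2 (h1 ▸ h3), fun β hβ => ?_⟩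
    have : β = 0 := le_antisymm hβ (zero_le (a := β))
    subst this; simp only [hausdorffIter_zero']; exact fun a b h => h
  · have hδ : δ < Order.succ δ := Order.lt_succ δ
    obtain ⟨hrefl, hsymm, htrans, hconv, hmono⟩ := IH δ hδ
    rw [← Ordinal.add_one_eq_succ]
    simp only [hausdorffIter_succ']
    refine ⟨hr_refl hrefl, fun a b => hr_symm, fun a b c => hr_trans,
      fun a b c => hr_conv, fun β hβ a b h => ?_⟩
    rcases eq_or_lt_of_le hβ with rfl | hlt
    · rwa [hausdorffIter_succ'] at h
    · have hβδ : β ≤ δ := by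
        rwa [Ordinal.add_one_eq_succ, Order.lt_succ_iff] at hlt
      exact hr_of_E hsymm htrans hconv (hmono β hβδ a b h)
  · have h1lt : (1 : Ordinal.{0}) < γ := Ordinal.one_lt_of_isSuccLimit hlim
    constructor
    · intro a
      rw [hausdorffIter_limit' hlim]
      exact ⟨0, hlim.pos, by rw [hausdorffIter_zero']⟩
    refine ⟨fun a b h => ?_, fun a b c h1 h2 => ?_, fun a b c h1 h2 h3 => ?_,
      fun β hβ a b h => ?_⟩
    · rw [hausdorffIter_limit' hlim] at h ⊢
      obtain ⟨β, hβ, h⟩ := h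
      exact ⟨β, hβ, (IH β hβ).2.1 a b h⟩
    · rw [hausdorffIter_limit' hlim] at h1 h2 ⊢
      obtain ⟨β₁, hβ₁, h1⟩ := h1
      obtain ⟨β₂, hβ₂, h2⟩ := h2
      refine ⟨max β₁ β₂, max_lt hβ₁ hβ₂, ?_⟩
      obtain ⟨_, _, htrans, _, hmono⟩ := IH (max β₁ β₂) (max_lt hβ₁ hβ₂)
      exact htrans a b c (hmono β₁ (le_max_left _ _) a b h1)
        (hmono β₂ (le_max_right _ _) b c h2)
    · rw [hausdorffIter_limit' hlim] at h1 ⊢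
      obtain ⟨β, hβ, h1⟩ := h1
      exact ⟨β, hβ, (IH β hβ).2.2.2.1 a b c h1 h2 h3⟩
    · rcases eq_or_lt_of_le hβ with rfl | hlt
      · exact h
      · rw [hausdorffIter_limit' hlim]
        exact ⟨β, hlt, h⟩

variable {L}

theorem hIter_refl (γ : Ordinal.{0}) (a : L) : hausdorffIter L γ a a := (hIter_pack L γ).1 a

theorem hIter_symm {γ : Ordinal.{0}} {a b : L} (h : hausdorffIter L γ a b) :
    hausdorffIter L γ b a := (hIter_pack L γ).2.1 a b h

theorem hIter_trans {γ : Ordinal.{0}} {a b c : L} (h1 : hausdorffIter L γ a b)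
    (h2 : hausdorffIter L γ b c) : hausdorffIter L γ a c := (hIter_pack L γ).2.2.1 a b c h1 h2

theorem hIter_mono {β γ : Ordinal.{0}} (hβγ : β ≤ γ) {a b : L} (h : hausdorffIter L β a b) :
    hausdorffIter L γ a b := (hIter_pack L γ).2.2.2.2 β hβγ a b h

end pack
end hausfacts

noncomputable section tplusfacts
open Symb

variable {T : Set (List Symb)}

theorem tplus_not_mem {l : List Symb} (h : l ∈ Tplus T) : l ∉ T := by
  obtain ⟨σ, hσ, a, rfl, hna⟩ := h
  exact hna

theorem not_mem_T_fin (hdom : ∀ σ ∈ T, ∀ s ∈ σ, ∃ n : ℕ, s = Symb.pair (2 * n))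
    (σ : List Symb) (n : ℕ) : σ ++ [Symb.fin n] ∉ T := by
  intro h
  obtain ⟨m, hm⟩ := hdom _ h (Symb.fin n) (by simp)
  exact Symb.noConfusion hm

theorem not_mem_T_infty (hdom : ∀ σ ∈ T, ∀ s ∈ σ, ∃ n : ℕ, s = Symb.pair (2 * n))
    (σ : List Symb) : σ ++ [Symb.infty] ∉ T := by
  intro h
  obtain ⟨m, hm⟩ := hdom _ h Symb.infty (by simp)
  exact Symb.noConfusion hm

theorem mem_tplus_fin (hdom : ∀ σ ∈ T, ∀ s ∈ σ, ∃ n : ℕ, s = Symb.pair (2 * n))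
    {σ : List Symb} (hσ : σ ∈ T) (n : ℕ) : σ ++ [Symb.fin n] ∈ Tplus T :=
  ⟨σ, hσ, Symb.fin n, rfl, not_mem_T_fin hdom σ n⟩

theorem mem_tplus_infty (hdom : ∀ σ ∈ T, ∀ s ∈ σ, ∃ n : ℕ, s = Symb.pair (2 * n))
    {σ : List Symb} (hσ : σ ∈ T) : σ ++ [Symb.infty] ∈ Tplus T :=
  ⟨σ, hσ, Symb.infty, rfl, not_mem_T_infty hdom σ⟩

theorem mem_tplus_of_not {σ : List Symb} {e : Symb} (hσ : σ ∈ T) (h : σ ++ [e] ∉ T) :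
    σ ++ [e] ∈ Tplus T := ⟨σ, hσ, e, rfl, h⟩

theorem tplus_decomp {l σ : List Symb} (hl : l ∈ Tplus T) (hσ : σ ∈ T) (hpre : σ <+: l) :
    ∃ (e : Symb) (w : List Symb), l = σ ++ e :: w := by
  obtain ⟨r, hr⟩ := hpre
  cases r with
  | nil => exact absurd (by rw [← hr]; simpa using hσ) (tplus_not_mem hl)
  | cons e w => exact ⟨e, w, hr.symm⟩

theorem tplus_drop (hTree : IsTree T) {σ : List Symb} {e : Symb} {w : List Symb}
    (hl : σ ++ e :: w ∈ Tplus T) (hw : w ≠ []) : σ ++ [e] ∈ T := by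
  obtain ⟨τ, hτ, b, hb, -⟩ := hl
  have hpre1 : σ ++ [e] <+: σ ++ e :: w := ⟨w, by simp⟩
  have hpre2 : τ <+: σ ++ e :: w := ⟨[b], hb.symm⟩
  have hlen : (σ ++ [e]).length ≤ τ.length := by
    have h1 : (σ ++ e :: w).length = τ.length + 1 := by rw [hb]; simp
    have h2 : (σ ++ e :: w).length = σ.length + w.length + 1 := by simp; omega
    have h3 : 1 ≤ w.length := by
      cases w with
      | nil => exact absurd rfl hw
      | cons _ _ => simp
    simp only [List.length_append, List.length_singleton]
    omega
  exact hTree τ hτ _ (List.prefix_of_prefix_length_le hpre1 hpre2 hlen)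

theorem tplus_tail_nil {σ : List Symb} {e : Symb} {w : List Symb} (hTree : IsTree T)
    (hl : σ ++ e :: w ∈ Tplus T) (hnot : σ ++ [e] ∉ T) : w = [] := by
  by_contra hwne
  exact hnot (tplus_drop hTree hl hwne)

theorem tplus_le_max (hdom : ∀ σ ∈ T, ∀ s ∈ σ, ∃ n : ℕ, s = Symb.pair (2 * n))
    (hTree : IsTree T) {l σ : List Symb} (hl : l ∈ Tplus T) (hpre : σ <+: l) (hσ : σ ∈ T) :
    l ≤ σ ++ [Symb.infty] := by
  obtain ⟨e, w, rfl⟩ := tplus_decomp hl hσ hpre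
  by_cases he : e = Symb.infty
  · subst he
    have hw : w = [] := tplus_tail_nil hTree hl (not_mem_T_infty hdom σ)
    subst hw
    exact le_rfl
  · exact le_of_lt (lex_append_left σ (List.Lex.rel (Symb.lt_infty he)))

theorem tplus_eq_max_iff (hdom : ∀ σ ∈ T, ∀ s ∈ σ, ∃ n : ℕ, s = Symb.pair (2 * n))
    (hTree : IsTree T) {σ : List Symb} {e : Symb} {w : List Symb}
    (hl : σ ++ e :: w ∈ Tplus T) (he : e = Symb.infty) : σ ++ e :: w = σ ++ [Symb.infty] := by
  subst he
  rw [tplus_tail_nil hTree hl (not_mem_T_infty hdom σ)]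

theorem tplus_ge_min {l σ : List Symb} (hl : l ∈ Tplus T) (hpre : σ <+: l) (hσ : σ ∈ T) :
    σ ++ [Symb.fin 0] ≤ l := by
  obtain ⟨e, w, rfl⟩ := tplus_decomp hl hσ hpre
  exact (lex_append_left_le_iff σ).mpr (singleton_le_cons (Symb.fin_zero_le e))

theorem tplus_conv {x y c σ : List Symb} (hc : c ∈ Tplus T) (hσ : σ ∈ T)
    (hx : σ <+: x) (hy : σ <+: y) (hxc : x ≤ c) (hcy : c ≤ y) : σ <+: c := by
  rcases prefix_or_lex σ c with hp | h | h
  · exact hp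
  · obtain ⟨rx, rfl⟩ := hx
    exact absurd (h rx) (not_lt.mpr hxc)
  · obtain ⟨ry, rfl⟩ := hy
    exact absurd (h ry) (not_lt.mpr hcy)

end tplusfacts

noncomputable section keyparts
open Symb
open Classical

variable {T : Set (List Symb)}

theorem keyA (hTree : IsTree T)
    (hdom : ∀ σ ∈ T, ∀ s ∈ σ, ∃ n : ℕ, s = Symb.pair (2 * n))
    (hwf : WellFoundedTree T) :
    ∀ ρ : Ordinal.{0}, ∀ σ : List Symb, σ ∈ T → erank T σ = (ρ : WithTop Ordinal.{0}) →
    ∀ x y : {l : List Symb // l ∈ Tplus T}, σ <+: x.val → σ <+: y.val →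
    x.val ≠ σ ++ [Symb.infty] → y.val ≠ σ ++ [Symb.infty] →
    hausdorffIter {l : List Symb // l ∈ Tplus T} ρ x y := by
  intro ρ
  induction ρ using Ordinal.induction with
  | _ ρ IH =>
  intro σ hσ hrk
  have hni : ¬ IllNode T σ := not_ill hTree hwf σ
  have hrkσ : rk T σ = ρ := by
    have h := erank_eq_rk hni
    rw [hrk] at h
    exact_mod_cast h.symm
  suffices key : ∀ x y : {l : List Symb // l ∈ Tplus T}, x ≤ y → σ <+: x.val → σ <+: y.val →
      x.val ≠ σ ++ [Symb.infty] → y.val ≠ σ ++ [Symb.infty] →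
      hausdorffIter {l : List Symb // l ∈ Tplus T} ρ x y by
    intro x y hx hy hxm hym
    rcases le_total x y with h | h
    · exact key x y h hx hy hxm hym
    · exact hIter_symm (key y x h hy hx hym hxm)
  intro x y hxy hx hy hxm hym
  obtain ⟨b, v, hyd⟩ := tplus_decomp y.2 hσ hy
  have hbninf : b ≠ Symb.infty := by
    rintro rfl
    exact hym (hyd ▸ tplus_eq_max_iff hdom hTree (hyd ▸ y.2) rfl)
  obtain ⟨N, hN⟩ := Symb.val_ne_top_iff.mp hbninf
  set E : Finset Symb := (Finset.range (N+1)).image Symb.ofNat with hE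
  have hEmem : ∀ e : Symb, e ≤ b → e ∈ E := by
    intro e he
    have hne : e ≠ Symb.infty := by
      rintro rfl
      have := Symb.le_def.mp he
      rw [hN] at this
      exact absurd this (by simp [Symb.val])
    obtain ⟨m, hm⟩ := Symb.val_ne_top_iff.mp hne
    have hmN : m < N + 1 := by
      have := Symb.le_def.mp he
      rw [hm, hN] at this
      have : m ≤ N := by exact_mod_cast this
      omega
    rw [hE]
    exact Finset.mem_image.mpr ⟨m, Finset.mem_range.mpr hmN, (Symb.eq_ofNat hm).symm⟩
  set f : Symb → Ordinal.{0} := fun e => if σ ++ [e] ∈ T then rk T (σ ++ [e]) else 0 with hf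
  set δ := E.sup f with hδdef
  have hρpos : (0 : Ordinal.{0}) < ρ := hrkσ ▸ rk_pos σ
  have hδρ : δ < ρ := by
    rw [hδdef, Finset.sup_lt_iff (by rw [Ordinal.bot_eq_zero]; exact hρpos)]
    intro e _
    by_cases hc : σ ++ [e] ∈ T
    · simp only [hf, if_pos hc]
      exact hrkσ ▸ rk_child_lt hTree hwf hσ hc
    · simp only [hf, if_neg hc]
      exact hρpos
  have hsucc : δ + 1 ≤ ρ := by
    rw [Ordinal.add_one_eq_succ]; exact Order.succ_le_of_lt hδρ
  refine hIter_mono hsucc ?_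
  rw [hausdorffIter_succ']
  set g₁ : Symb → {l : List Symb // l ∈ Tplus T} := fun e =>
    if h : σ ++ [e] ∈ T then ⟨σ ++ [e] ++ [Symb.fin 0], mem_tplus_fin hdom h 0⟩
    else ⟨σ ++ [e], mem_tplus_of_not hσ h⟩ with hg₁
  set g₂ : Symb → {l : List Symb // l ∈ Tplus T} := fun e =>
    if h : σ ++ [e] ∈ T then ⟨σ ++ [e] ++ [Symb.infty], mem_tplus_infty hdom h⟩
    else ⟨σ ++ [e], mem_tplus_of_not hσ h⟩ with hg₂
  refine ⟨E.image g₁ ∪ E.image g₂, fun c hc1 hc2 => ?_⟩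
  rw [min_eq_left hxy] at hc1
  rw [max_eq_right hxy] at hc2
  have hxc : x.val ≤ c.val := hc1
  have hcy : c.val ≤ y.val := hc2
  have hcpre : σ <+: c.val := tplus_conv c.2 hσ hx hy hxc hcy
  obtain ⟨e, w, hcd⟩ := tplus_decomp c.2 hσ hcpre
  have heb : e ≤ b := by
    rw [hcd, hyd] at hcy
    exact first_le_of_cons_le ((lex_append_left_le_iff σ).mp hcy)
  have heE : e ∈ E := hEmem e heb
  by_cases hch : σ ++ [e] ∈ T
  · have hepre : (σ ++ [e]) <+: c.val := ⟨w, by rw [hcd]; simp⟩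
    by_cases hcmax : c.val = σ ++ [e] ++ [Symb.infty]
    · refine ⟨g₂ e, Finset.mem_union_right _ (Finset.mem_image_of_mem g₂ heE), ?_⟩
      have hgc : g₂ e = c := Subtype.ext (by rw [hg₂]; simp only [dif_pos hch]; rw [hcmax])
      rw [hgc]
      exact hIter_refl _ _
    · refine ⟨g₁ e, Finset.mem_union_left _ (Finset.mem_image_of_mem g₁ heE), ?_⟩
      obtain ⟨herk, hlt⟩ := erank_child hTree hwf hσ hch
      have hpre' : (σ ++ [e]) <+: (g₁ e).val := by
        rw [hg₁]; simp only [dif_pos hch]; exact ⟨[Symb.fin 0], rfl⟩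
      have hcne : c.val ≠ (σ ++ [e]) ++ [Symb.infty] := hcmax
      have hgne : (g₁ e).val ≠ (σ ++ [e]) ++ [Symb.infty] := by
        rw [hg₁]; simp only [dif_pos hch]; simp
      have hA := IH (rk T (σ ++ [e])) (hrkσ ▸ hlt) (σ ++ [e]) hch herk c (g₁ e)
        hepre hpre' hcne hgne
      have hle : rk T (σ ++ [e]) ≤ δ := by
        have h := Finset.le_sup (f := f) heE
        simp only [hf, if_pos hch] at h
        exact h
      exact hIter_mono hle hA
  · have hw : w = [] := tplus_tail_nil hTree (hcd ▸ c.2) hch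
    refine ⟨g₁ e, Finset.mem_union_left _ (Finset.mem_image_of_mem g₁ heE), ?_⟩
    have hgc : g₁ e = c := Subtype.ext (by rw [hg₁]; simp only [dif_neg hch]; rw [hcd, hw])
    rw [hgc]
    exact hIter_refl _ _

theorem keyL (hTree : IsTree T)
    (hdom : ∀ σ ∈ T, ∀ s ∈ σ, ∃ n : ℕ, s = Symb.pair (2 * n))
    (hwf : WellFoundedTree T) (hfat : FatTree T) :
    ∀ ρ : Ordinal.{0}, ∀ σ : List Symb, σ ∈ T → erank T σ = (ρ : WithTop Ordinal.{0}) →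
    ∀ x y : {l : List Symb // l ∈ Tplus T}, x.val ≤ σ ++ [Symb.fin 0] →
    σ ++ [Symb.infty] ≤ y.val →
    ¬ hausdorffIter {l : List Symb // l ∈ Tplus T} ρ x y := by
  intro ρ
  induction ρ using Ordinal.induction with
  | _ ρ IH =>
  intro σ hσ hrk x y hxl hyl hH
  have hni : ¬ IllNode T σ := not_ill hTree hwf σ
  have hrkσ : rk T σ = ρ := by
    have h := erank_eq_rk hni
    rw [hrk] at h
    exact_mod_cast h.symm
  have hfi : σ ++ [Symb.fin 0] < σ ++ [Symb.infty] :=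
    lex_append_left σ (List.Lex.rel (Symb.lt_infty (by simp)))
  have hxy : x ≤ y := Subtype.coe_le_coe.mp (le_trans hxl (le_trans (le_of_lt hfi) hyl))
  -- the core successor-stage argument
  have core : ∀ δ : Ordinal.{0}, 1 ≤ δ → δ < ρ →
      hausdorffRel (hausdorffIter {l : List Symb // l ∈ Tplus T} δ) x y → False := by
    intro δ hδ1 hδρ hcov
    have hSinf : {a : Symb | σ ++ [a] ∈ T ∧ erank T (σ ++ [a]) = (δ : WithTop Ordinal.{0})}.Infinite := by
      refine hfat σ hσ (δ : WithTop Ordinal.{0}) ?_ ?_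
      · exact_mod_cast hδ1
      · rw [eLT, hrk]
        exact Or.inl (by exact_mod_cast hδρ)
    set S := {a : Symb | σ ++ [a] ∈ T ∧ erank T (σ ++ [a]) = (δ : WithTop Ordinal.{0})} with hS
    obtain ⟨s, hs⟩ := hcov
    classical
    set p : Symb → {l : List Symb // l ∈ Tplus T} := fun a =>
      if h : a ∈ S then ⟨σ ++ [a] ++ [Symb.fin 0], mem_tplus_fin hdom h.1 0⟩
      else ⟨σ ++ [Symb.fin 0], mem_tplus_fin hdom hσ 0⟩ with hp
    have hpa : ∀ a ∈ S, (p a).val = σ ++ [a] ++ [Symb.fin 0] := by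
      intro a ha; simp only [hp, dif_pos ha]
    have halt : ∀ a ∈ S, Symb.fin 0 < a ∧ a < Symb.infty := by
      intro a ha
      obtain ⟨n, rfl⟩ := hdom _ ha.1 a (by simp)
      exact ⟨Symb.fin_zero_lt_pair _, Symb.pair_lt_infty _⟩
    have hrange : ∀ a ∈ S, min x y ≤ p a ∧ p a ≤ max x y := by
      intro a ha
      rw [min_eq_left hxy, max_eq_right hxy]
      constructor
      · refine Subtype.coe_le_coe.mp (le_trans hxl ?_)
        rw [hpa a ha, List.append_assoc]
        exact (lex_append_left_le_iff σ).mpr (singleton_le_cons (le_of_lt (halt a ha).1))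
      · refine Subtype.coe_le_coe.mp (le_trans ?_ hyl)
        rw [hpa a ha, List.append_assoc]
        exact le_of_lt (lex_append_left σ (List.Lex.rel (halt a ha).2))
    have hD : ∀ a ∈ S, ∃ d ∈ s, hausdorffIter {l : List Symb // l ∈ Tplus T} δ (p a) d :=
      fun a ha => hs (p a) (hrange a ha).1 (hrange a ha).2
    set D : Symb → {l : List Symb // l ∈ Tplus T} := fun a =>
      if h : ∃ d ∈ s, hausdorffIter {l : List Symb // l ∈ Tplus T} δ (p a) d then h.choose
      else ⟨σ ++ [Symb.fin 0], mem_tplus_fin hdom hσ 0⟩ with hDdef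
    have hDmem : ∀ a ∈ S, D a ∈ s ∧ hausdorffIter {l : List Symb // l ∈ Tplus T} δ (p a) (D a) := by
      intro a ha
      have hex := hD a ha
      simp only [hDdef, dif_pos hex]
      exact hex.choose_spec
    have hsub : S ⊆ ⋃ d ∈ (s : Set {l : List Symb // l ∈ Tplus T}), {a ∈ S | D a = d} :=
      fun a ha => Set.mem_biUnion (hDmem a ha).1 ⟨ha, rfl⟩
    have hex : ∃ d₀ ∈ (s : Set {l : List Symb // l ∈ Tplus T}), {a ∈ S | D a = d₀}.Infinite := by
      by_contra hno
      push_neg at hno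
      refine hSinf (Set.Finite.subset (Set.Finite.biUnion s.finite_toSet
        (fun d hd => hno d hd)) hsub)
    obtain ⟨d₀, _, hFinf⟩ := hex
    have hpick : ∀ b : Symb, b ≠ Symb.infty → ∃ a ∈ {a ∈ S | D a = d₀}, b < a := by
      intro b hb
      obtain ⟨a, ha, hna⟩ := (hFinf.diff (Symb.le_finite hb)).nonempty
      exact ⟨a, ha, not_le.mp hna⟩
    obtain ⟨a₁, ha₁⟩ := hFinf.nonempty
    have ha₁ninf : a₁ ≠ Symb.infty := ne_of_lt (halt a₁ ha₁.1).2
    obtain ⟨a₂, ha₂, h12⟩ := hpick a₁ ha₁ninf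
    have ha₂ninf : a₂ ≠ Symb.infty := ne_of_lt (halt a₂ ha₂.1).2
    obtain ⟨a₃, ha₃, h23⟩ := hpick a₂ ha₂ninf
    have h13 : hausdorffIter {l : List Symb // l ∈ Tplus T} δ (p a₁) (p a₃) := by
      have h1 := (hDmem a₁ ha₁.1).2
      have h3 := (hDmem a₃ ha₃.1).2
      rw [ha₁.2] at h1
      rw [ha₃.2] at h3
      exact hIter_trans h1 (hIter_symm h3)
    refine IH δ hδρ (σ ++ [a₂]) ha₂.1.1 ha₂.1.2 (p a₁) (p a₃) ?_ ?_ h13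
    · rw [hpa a₁ ha₁.1, List.append_assoc, List.append_assoc]
      exact le_of_lt (lex_append_left σ (List.Lex.rel h12))
    · rw [hpa a₃ ha₃.1, List.append_assoc, List.append_assoc]
      exact le_of_lt (lex_append_left σ (List.Lex.rel h23))
  -- case analysis on the shape of ρ
  rcases Ordinal.zero_or_succ_or_isSuccLimit ρ with rfl | ⟨δ₀, rfl⟩ | hlim
  · exact (rk_pos σ).ne' hrkσ
  · by_cases hδ0 : δ₀ = 0
    · subst hδ0
      rw [← Ordinal.add_one_eq_succ, hausdorffIter_succ', hausdorffIter_zero'] at hH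
      obtain ⟨s, hs⟩ := hH
      have hmem : ∀ n : ℕ, (⟨σ ++ [Symb.fin n], mem_tplus_fin hdom hσ n⟩ :
          {l : List Symb // l ∈ Tplus T}) ∈ s := by
        intro n
        have h1 : x.val ≤ σ ++ [Symb.fin n] := le_trans hxl
          ((lex_append_left_le_iff σ).mpr (singleton_le_cons
            (Symb.le_def.mpr (by simp only [Symb.val]; exact_mod_cast (by omega : 2*0 ≤ 2*n)))))
        have h2 : σ ++ [Symb.fin n] ≤ y.val := le_trans
          (le_of_lt (lex_append_left σ (List.Lex.rel (Symb.lt_infty (by simp))))) hyl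
        obtain ⟨d, hd, heq⟩ := hs ⟨σ ++ [Symb.fin n], mem_tplus_fin hdom hσ n⟩
          (by rw [min_eq_left hxy]; exact h1) (by rw [max_eq_right hxy]; exact h2)
        exact heq ▸ hd
      have hinj : Function.Injective (fun n : ℕ => (⟨σ ++ [Symb.fin n],
          mem_tplus_fin hdom hσ n⟩ : {l : List Symb // l ∈ Tplus T})) := by
        intro n m h
        have := congrArg Subtype.val h
        simp only at this
        have h2 := List.append_cancel_left this
        simpa using h2
      exact (Set.infinite_range_of_injective hinj)
        (Set.Finite.subset s.finite_toSet (by rintro _ ⟨n, rfl⟩; exact hmem n))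
    · have h1le : (1 : Ordinal.{0}) ≤ δ₀ := Ordinal.one_le_iff_ne_zero.mpr hδ0
      rw [← Ordinal.add_one_eq_succ, hausdorffIter_succ'] at hH
      exact core δ₀ h1le (Order.lt_succ δ₀) hH
  · rw [hausdorffIter_limit' hlim] at hH
    obtain ⟨γ, hγ, hγH⟩ := hH
    have hδρ : max γ 1 < ρ := max_lt hγ (Ordinal.one_lt_of_isSuccLimit hlim)
    have hmono : hausdorffIter {l : List Symb // l ∈ Tplus T} (max γ 1 + 1) x y := by
      refine hIter_mono ?_ hγH
      calc γ ≤ max γ 1 := le_max_left _ _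
        _ ≤ max γ 1 + 1 := by rw [Ordinal.add_one_eq_succ]; exact le_of_lt (Order.lt_succ _)
    rw [hausdorffIter_succ'] at hmono
    exact core (max γ 1) (le_max_right _ _) hδρ hmono

end keyparts

/-- if `T ⊆ (2Ω)^{<ω}` is a well-founded fat tree of rank `β`, then the
Hausdorff rank of the lexicographic order `L_T` on `T⁺` is exactly `β + 1`: the
`(β+1)`-st Hausdorff iterate is total, and no earlier iterate is. -/
theorem hausdorff_rank_of_fat_tree (T : Set (List Symb)) (hTree : IsTree T)
    (hdom : ∀ σ ∈ T, ∀ s ∈ σ, ∃ n : ℕ, s = Symb.pair (2 * n))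
    (hroot : ([] : List Symb) ∈ T)
    (hwf : WellFoundedTree T) (hfat : FatTree T)
    (β : Ordinal.{0}) (hβ : erank T [] = (β : WithTop Ordinal.{0})) :
    (∀ a b : {l : List Symb // l ∈ Tplus T}, hausdorffIter {l : List Symb // l ∈ Tplus T} (β + 1) a b) ∧
      (∀ γ : Ordinal.{0}, γ < β + 1 →
        ∃ a b : {l : List Symb // l ∈ Tplus T}, ¬ hausdorffIter {l : List Symb // l ∈ Tplus T} γ a b) := by
  have m1 : [Symb.fin 0] ∈ Tplus T := mem_tplus_fin hdom hroot 0
  have m2 : [Symb.infty] ∈ Tplus T := mem_tplus_infty hdom hroot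
  constructor
  · intro a b
    rw [hausdorffIter_succ']
    refine ⟨{⟨[Symb.fin 0], m1⟩, ⟨[Symb.infty], m2⟩}, fun c _ _ => ?_⟩
    by_cases hc : c.val = [Symb.infty]
    · refine ⟨⟨[Symb.infty], m2⟩, by simp, ?_⟩
      have hceq : c = ⟨[Symb.infty], m2⟩ := Subtype.ext hc
      rw [hceq]
      exact hIter_refl _ _
    · refine ⟨⟨[Symb.fin 0], m1⟩, by simp, ?_⟩
      refine keyA hTree hdom hwf β [] hroot hβ c ⟨[Symb.fin 0], m1⟩
        (List.nil_prefix) (List.nil_prefix) ?_ ?_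
      · simpa using hc
      · simp
  · intro γ hγ
    have hγβ : γ ≤ β := by rwa [Ordinal.add_one_eq_succ, Order.lt_succ_iff] at hγ
    refine ⟨⟨[Symb.fin 0], m1⟩, ⟨[Symb.infty], m2⟩, fun h => ?_⟩
    refine keyL hTree hdom hwf hfat β [] hroot hβ ⟨[Symb.fin 0], m1⟩ ⟨[Symb.infty], m2⟩
      ?_ ?_ (hIter_mono hγβ h)
    · simp
    · simp
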